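/- Let T = 2^n with n ≥ 1 and suppose log T is odd. For each level i with 0 ≤ i ≤ log T − 1, let a_i be chosen independently and uniformly at random from {0, 1, ..., log T}. Then for any fixed nonnegative integer x̄, the probability that Σ_{i=0}^{log T − 1} a_i · 2^i = x̄ is at most 1/T. -/

import Mathlib

open Finset

lemma bin_inj : ∀ (n : ℕ) (ε ε' : Fin n → ℕ), (∀ i, ε i < 2) → (∀ i, ε' i < 2) →
    (∑ i, ε i * 2 ^ (i : ℕ)) = (∑ i, ε' i * 2 ^ (i : ℕ)) → ∀ i, ε i = ε' i := by
  intro n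
  induction n with
  | zero => intro _ _ _ _ _ i; exact i.elim0
  | succ k ih =>
    intro ε ε' h h' hs
    rw [Fin.sum_univ_succ, Fin.sum_univ_succ] at hs
    simp only [Fin.val_zero, pow_zero, mul_one, Fin.val_succ, pow_succ'] at hs
    have hs2 : ε 0 + 2 * ∑ i : Fin k, ε i.succ * 2 ^ (i : ℕ) =
        ε' 0 + 2 * ∑ i : Fin k, ε' i.succ * 2 ^ (i : ℕ) := by
      rw [Finset.mul_sum, Finset.mul_sum]
      convert hs using 3 <;> ring
    have h0 : ε 0 = ε' 0 := by
      have := congrArg (· % 2) hs2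
      simpa [Nat.add_mul_mod_self_left, Nat.mod_eq_of_lt (h 0), Nat.mod_eq_of_lt (h' 0)] using this
    have hsum : ∑ i : Fin k, ε i.succ * 2 ^ (i : ℕ) = ∑ i : Fin k, ε' i.succ * 2 ^ (i : ℕ) := by
      omega
    have := ih (fun i => ε i.succ) (fun i => ε' i.succ) (fun i => h i.succ) (fun i => h' i.succ) hsum
    intro i
    cases i using Fin.cases with
    | zero => exact h0
    | succ j => exact this j

theorem spray_landing_prob_le (n : ℕ) (hn : 1 ≤ n) (hodd : Odd n) (x : ℕ) :
    (((Finset.univ.filter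
        (fun a : Fin n → Fin (n + 1) => ∑ i : Fin n, (a i : ℕ) * 2 ^ (i : ℕ) = x)).card : ℝ)
      / (Fintype.card (Fin n → Fin (n + 1)) : ℝ)) ≤ 1 / (2 ^ n : ℝ) := by
  obtain ⟨m, hm⟩ := hodd
  -- injection into quotients
  have hlt : ∀ (a : Fin n → Fin (n + 1)) (i : Fin n), (a i : ℕ) / 2 < m + 1 := by
    intro a i
    have := (a i).isLt
    omega
  set S := Finset.univ.filter
      (fun a : Fin n → Fin (n + 1) => ∑ i : Fin n, (a i : ℕ) * 2 ^ (i : ℕ) = x) with hS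
  have hcard : S.card ≤ (m + 1) ^ n := by
    have : S.card ≤ (Finset.univ : Finset (Fin n → Fin (m + 1))).card := by
      apply Finset.card_le_card_of_injOn (fun a i => ⟨(a i : ℕ) / 2, hlt a i⟩)
        (fun _ _ => Finset.mem_univ _)
      intro a ha b hb hab
      simp only [hS, Finset.mem_coe, Finset.mem_filter] at ha hb
      have hq : ∀ i : Fin n, (a i : ℕ) / 2 = (b i : ℕ) / 2 := by
        intro i
        exact congrArg Fin.val (congrFun hab i)
      have hdecomp : ∀ (c : Fin n → Fin (n + 1)),
          ∑ i : Fin n, (c i : ℕ) * 2 ^ (i : ℕ) =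
          2 * ∑ i : Fin n, ((c i : ℕ) / 2) * 2 ^ (i : ℕ) +
          ∑ i : Fin n, ((c i : ℕ) % 2) * 2 ^ (i : ℕ) := by
        intro c
        rw [Finset.mul_sum, ← Finset.sum_add_distrib]
        apply Finset.sum_congr rfl
        intro i _
        have : (c i : ℕ) = 2 * ((c i : ℕ) / 2) + (c i : ℕ) % 2 := (Nat.div_add_mod _ 2).symm
        calc (c i : ℕ) * 2 ^ (i : ℕ) = (2 * ((c i : ℕ) / 2) + (c i : ℕ) % 2) * 2 ^ (i : ℕ) := by
              rw [← this]
          _ = 2 * ((c i : ℕ) / 2 * 2 ^ (i : ℕ)) + (c i : ℕ) % 2 * 2 ^ (i : ℕ) := by ring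
      have hsq : ∑ i : Fin n, ((a i : ℕ) / 2) * 2 ^ (i : ℕ)
          = ∑ i : Fin n, ((b i : ℕ) / 2) * 2 ^ (i : ℕ) :=
        Finset.sum_congr rfl (fun i _ => by rw [hq i])
      have hpar : ∑ i : Fin n, ((a i : ℕ) % 2) * 2 ^ (i : ℕ)
          = ∑ i : Fin n, ((b i : ℕ) % 2) * 2 ^ (i : ℕ) := by
        have ha' := hdecomp a
        have hb' := hdecomp b
        rw [ha.2] at ha'
        rw [hb.2] at hb'
        omega
      have hpareq := bin_inj n (fun i => (a i : ℕ) % 2) (fun i => (b i : ℕ) % 2)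
        (fun i => Nat.mod_lt _ (by norm_num)) (fun i => Nat.mod_lt _ (by norm_num)) hpar
      funext i
      have h1 := hq i
      have h2 : (a i : ℕ) % 2 = (b i : ℕ) % 2 := hpareq i
      exact Fin.ext (by omega)
    simpa using this
  have hpos : (0:ℝ) < ((n + 1 : ℕ) : ℝ) ^ n := by positivity
  rw [Fintype.card_fun, Fintype.card_fin, Fintype.card_fin]
  rw [div_le_div_iff₀ (by positivity) (by positivity), one_mul]
  push_cast
  calc (S.card : ℝ) * 2 ^ n ≤ ((m : ℝ) + 1) ^ n * 2 ^ n := by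
        apply mul_le_mul_of_nonneg_right _ (by positivity)
        exact_mod_cast hcard
    _ = ((n : ℝ) + 1) ^ n := by
        rw [← mul_pow]
        congr 1
        subst hm
        push_cast
        ring
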